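/- arXiv:math/0308259 — 6 statements merged into one kernel-verified Lean document; each statement's English description precedes it below -/
import Mathlib

section
/- Let G be a compact Hausdorff topological group with normalized Haar measure μ, let π be a continuous unitary representation of G on a complex Hilbert space H, and let ξ ∈ H with ‖ξ‖ = 1. Define T : H → H by Tη = ∫ ⟨η, π(x)ξ⟩ π(x)ξ dμ(x) (a Bochner integral). Then T is a bounded linear operator which is positive (⟨Tη, η⟩ ≥ 0 for all η), nonzero, compact, and satisfies T ∘ π(g) = π(g) ∘ T for every g ∈ G. -/
open MeasureTheory

/-- Let `G` be a compact Hausdorff group with normalized Haar measure `μ`, `π` a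
continuous unitary representation of `G` on a complex Hilbert space `H`, and
`ξ ∈ H` a unit vector.  Then the map `η ↦ ∫ ⟨η, π(x)ξ⟩ π(x)ξ dμ(x)` (inner
product linear in its first variable, i.e. `⟨η, ζ⟩ = inner ℂ ζ η` in Mathlib's
convention) is a bounded linear operator `T` on `H` which is positive, nonzero,
compact, and commutes with every `π g`. -/
theorem stmt5 {G : Type*} [Group G] [TopologicalSpace G] [IsTopologicalGroup G]
    [CompactSpace G] [T2Space G] [MeasurableSpace G] [BorelSpace G]
    (μ : Measure G) [μ.IsHaarMeasure] [IsProbabilityMeasure μ]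
    {H : Type*} [NormedAddCommGroup H] [InnerProductSpace ℂ H] [CompleteSpace H]
    (π : G →* (H ≃ₗᵢ[ℂ] H)) (hπ : ∀ ξ : H, Continuous fun g => π g ξ)
    (ξ : H) (hξ : ‖ξ‖ = 1) :
    ∃ T : H →L[ℂ] H,
      (∀ η : H, T η = ∫ x, (inner ℂ (π x ξ) η : ℂ) • (π x ξ) ∂μ) ∧
      T.IsPositive ∧ T ≠ 0 ∧ IsCompactOperator (⇑T) ∧
      ∀ g : G, ∀ v : H, T (π g v) = π g (T v) := by
  classical
  set u : G → H := fun x => π x ξ with hu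
  have hu_cont : Continuous u := hπ ξ
  have hu_norm : ∀ x, ‖u x‖ = 1 := fun x => by
    show ‖π x ξ‖ = 1
    rw [(π x).norm_map, hξ]
  -- integrability of the vector-valued integrand
  have key_int : ∀ η : H, Integrable (fun x => (inner ℂ (u x) η : ℂ) • u x) μ := by
    intro η
    have hc : Continuous fun x => (inner ℂ (u x) η : ℂ) • u x :=
      (hu_cont.inner continuous_const).smul hu_cont
    exact hc.integrable_of_hasCompactSupport (HasCompactSupport.of_compactSpace _)
  -- integrability of the scalar integrands
  have key_int2 : ∀ η ζ : H,
      Integrable (fun x => (inner ℂ (u x) η : ℂ) * inner ℂ ζ (u x)) μ := by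
    intro η ζ
    have hc : Continuous fun x => (inner ℂ (u x) η : ℂ) * inner ℂ ζ (u x) :=
      (hu_cont.inner continuous_const).mul (continuous_const.inner hu_cont)
    exact hc.integrable_of_hasCompactSupport (HasCompactSupport.of_compactSpace _)
  -- the linear map
  let T₀ : H →ₗ[ℂ] H :=
    { toFun := fun η => ∫ x, (inner ℂ (u x) η : ℂ) • u x ∂μ
      map_add' := fun η ζ => by
        simp_rw [inner_add_right, add_smul]
        exact integral_add (key_int η) (key_int ζ)
      map_smul' := fun c η => by
        simp only [RingHom.id_apply]
        simp_rw [inner_smul_right, mul_smul]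
        exact integral_smul c _ }
  have hbound : ∀ η : H, ‖T₀ η‖ ≤ 1 * ‖η‖ := by
    intro η
    rw [one_mul]
    calc ‖∫ x, (inner ℂ (u x) η : ℂ) • u x ∂μ‖
        ≤ ∫ x, ‖(inner ℂ (u x) η : ℂ) • u x‖ ∂μ := norm_integral_le_integral_norm _
      _ ≤ ∫ _x, ‖η‖ ∂μ := by
          refine integral_mono (key_int η).norm (integrable_const _) fun x => ?_
          rw [norm_smul, hu_norm x, mul_one]
          calc ‖(inner ℂ (u x) η : ℂ)‖ ≤ ‖u x‖ * ‖η‖ := norm_inner_le_norm _ _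
            _ = ‖η‖ := by rw [hu_norm x, one_mul]
      _ = ‖η‖ := by simp
  let T : H →L[ℂ] H := T₀.mkContinuous 1 hbound
  have hT : ∀ η : H, T η = ∫ x, (inner ℂ (u x) η : ℂ) • u x ∂μ := fun η => rfl
  -- inner ℂ product formula
  have hinner : ∀ η ζ : H,
      (inner ℂ ζ (T η) : ℂ) = ∫ x, (inner ℂ (u x) η : ℂ) * inner ℂ ζ (u x) ∂μ := by
    intro η ζ
    rw [hT, ← integral_inner (key_int η) ζ]
    simp_rw [inner_smul_right]
  have hsym : IsSelfAdjoint T := by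
    rw [ContinuousLinearMap.isSelfAdjoint_iff_isSymmetric]
    intro η ζ
    simp only [ContinuousLinearMap.coe_coe]
    have h1 : (inner ℂ (T η) ζ : ℂ) = starRingEnd ℂ (inner ℂ ζ (T η)) :=
      (inner_conj_symm _ _).symm
    rw [h1, hinner, ← integral_conj, hinner]
    congr 1
    funext x
    simp only [map_mul, inner_conj_symm]
    ring
  -- positivity
  have hpos_inner : ∀ η : H,
      (inner ℂ η (T η) : ℂ) = ∫ x, (Complex.normSq (inner ℂ η (u x) : ℂ) : ℂ) ∂μ := by
    intro η
    rw [hinner]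
    congr 1
    funext x
    have hconj : starRingEnd ℂ (inner ℂ η (u x) : ℂ) = inner ℂ (u x) η := inner_conj_symm _ _
    rw [← hconj, mul_comm, Complex.mul_conj]
  have hint3 : ∀ η : H, Integrable (fun x => Complex.normSq (inner ℂ η (u x) : ℂ)) μ := by
    intro η
    have hc : Continuous fun x => Complex.normSq (inner ℂ η (u x) : ℂ) :=
      Complex.continuous_normSq.comp (continuous_const.inner hu_cont)
    exact hc.integrable_of_hasCompactSupport (HasCompactSupport.of_compactSpace _)
  refine ⟨T, fun η => hT η, ⟨ContinuousLinearMap.isSelfAdjoint_iff_isSymmetric.mp hsym, fun η => ?_⟩, ?_, ?_, ?_⟩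
  · -- positivity
    rw [ContinuousLinearMap.reApplyInnerSelf_apply]
    have hfc : Integrable (fun x => ((Complex.normSq (inner ℂ η (u x) : ℂ) : ℝ) : ℂ)) μ :=
      (hint3 η).ofReal
    rw [inner_re_symm (𝕜 := ℂ), hpos_inner η, ← integral_re hfc]
    refine integral_nonneg fun x => ?_
    simp only [RCLike.re_to_complex, Complex.ofReal_re]
    exact Complex.normSq_nonneg _
  · -- nonzero
    intro hT0
    have h0 : (inner ℂ ξ (T ξ) : ℂ) = 0 := by rw [hT0]; simp
    have h1 : (∫ x, Complex.normSq (inner ℂ ξ (u x) : ℂ) ∂μ : ℝ) = 0 := by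
      have h2 := congrArg (RCLike.re (K := ℂ)) ((hpos_inner ξ).symm.trans h0)
      have hfc : Integrable (fun x => ((Complex.normSq (inner ℂ ξ (u x) : ℂ) : ℝ) : ℂ)) μ :=
        (hint3 ξ).ofReal
      rw [← integral_re hfc] at h2
      simpa only [RCLike.re_to_complex, Complex.ofReal_re, map_zero] using h2
    have hu1 : u 1 = ξ := by show (π 1) ξ = ξ; rw [map_one]; rfl
    have hf1 : Complex.normSq (inner ℂ ξ (u 1) : ℂ) = 1 := by
      rw [hu1]
      have : (inner ℂ ξ ξ : ℂ) = 1 := by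
        rw [inner_self_eq_norm_sq_to_K, hξ]; norm_num
      rw [this]; simp
    have hV : IsOpen ((fun x => Complex.normSq (inner ℂ ξ (u x) : ℂ)) ⁻¹' Set.Ioi 0) :=
      (Complex.continuous_normSq.comp (continuous_const.inner hu_cont)).isOpen_preimage
        _ isOpen_Ioi
    have hVpos : 0 < μ ((fun x => Complex.normSq (inner ℂ ξ (u x) : ℂ)) ⁻¹' Set.Ioi 0) := by
      refine hV.measure_pos μ ⟨1, ?_⟩
      simp [hf1]
    have hpos : 0 < ∫ x, Complex.normSq (inner ℂ ξ (u x) : ℂ) ∂μ := by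
      rw [integral_pos_iff_support_of_nonneg (fun x => Complex.normSq_nonneg _) (hint3 ξ)]
      refine lt_of_lt_of_le hVpos (measure_mono fun x hx => ?_)
      exact ne_of_gt hx
    rw [h1] at hpos
    exact lt_irrefl _ hpos
  · -- compactness
    set K : Set H := (fun p : ℂ × G => p.1 • u p.2) '' (Metric.closedBall 0 1 ×ˢ Set.univ)
      with hKdef
    have hKcomp : IsCompact K :=
      ((isCompact_closedBall (0 : ℂ) 1).prod isCompact_univ).image
        (continuous_fst.smul (hu_cont.comp continuous_snd))
    have hCcomp : IsCompact (closure (convexHull ℝ K)) :=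
      TotallyBounded.isCompact_of_isClosed
        (totallyBounded_convexHull.mpr hKcomp.totallyBounded).closure isClosed_closure
    refine ⟨closure (convexHull ℝ K), hCcomp, ?_⟩
    refine Filter.mem_of_superset (Metric.closedBall_mem_nhds (0 : H) one_pos) ?_
    intro η hη
    rw [Metric.mem_closedBall, dist_zero_right] at hη
    simp only [Set.mem_preimage]
    rw [hT]
    refine Convex.integral_mem ((convex_convexHull ℝ K).closure) isClosed_closure
      (Filter.Eventually.of_forall fun x => ?_) (key_int η)
    refine subset_closure (subset_convexHull ℝ K ?_)
    refine ⟨((inner ℂ (u x) η : ℂ), x), ⟨?_, trivial⟩, rfl⟩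
    rw [Metric.mem_closedBall, dist_zero_right]
    calc ‖(inner ℂ (u x) η : ℂ)‖ ≤ ‖u x‖ * ‖η‖ := norm_inner_le_norm _ _
      _ ≤ 1 := by rw [hu_norm x, one_mul]; exact hη
  · -- commutation
    intro g v
    have hmul : ∀ x : G, (π g) (u x) = u (g * x) := by
      intro x
      show (π g) ((π x) ξ) = (π (g * x)) ξ
      rw [map_mul]; rfl
    have hcomm : ∀ x : G, (π g) ((inner ℂ (u x) v : ℂ) • u x)
        = (inner ℂ (u (g * x)) ((π g) v) : ℂ) • u (g * x) := by
      intro x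
      rw [(π g).map_smul, hmul]
      congr 1
      rw [← hmul x, (π g).inner_map_map]
    rw [hT, hT]
    calc ∫ x, (inner ℂ (u x) ((π g) v) : ℂ) • u x ∂μ
        = ∫ x, (inner ℂ (u (g * x)) ((π g) v) : ℂ) • u (g * x) ∂μ :=
          (integral_mul_left_eq_self (fun y => (inner ℂ (u y) ((π g) v) : ℂ) • u y) g).symm
      _ = ∫ x, (π g) ((inner ℂ (u x) v : ℂ) • u x) ∂μ := by simp_rw [hcomm]
      _ = (π g) (∫ x, (inner ℂ (u x) v : ℂ) • u x ∂μ) :=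
          (π g).toLinearIsometry.integral_comp_comm _
end

section
/- Every irreducible continuous unitary representation of a compact Hausdorff topological group on a complex Hilbert space acts on a finite-dimensional space. -/
open MeasureTheory ComplexConjugate

section Aux

variable {H : Type*} [NormedAddCommGroup H] [InnerProductSpace ℂ H] [CompleteSpace H]

omit [CompleteSpace H] in
lemma rankOne_compact (v w : H) :
    IsCompactOperator (((innerSL ℂ v).smulRight w : H →L[ℂ] H)) := by
  rw [isCompactOperator_iff_exists_mem_nhds_image_subset_compact]
  refine ⟨Metric.closedBall 0 1, Metric.closedBall_mem_nhds 0 one_pos,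
    (fun c : ℂ => c • w) '' Metric.closedBall 0 (‖v‖ + 1),
    ((isCompact_closedBall 0 (‖v‖+1)).image (by continuity)), ?_⟩
  rintro - ⟨x, hx, rfl⟩
  refine ⟨inner ℂ v x, ?_, rfl⟩
  simp only [Metric.mem_closedBall, dist_zero_right] at *
  calc ‖(inner ℂ v x : ℂ)‖ ≤ ‖v‖ * ‖x‖ := norm_inner_le_norm v x
    _ ≤ ‖v‖ + 1 := by nlinarith [norm_nonneg v]

noncomputable def conjSAH (U : H ≃ₗᵢ[ℂ] H) : (H →L[ℂ] H) →⋆ₐ[ℂ] (H →L[ℂ] H) where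
  toFun x := (U : H →L[ℂ] H) ∘L x ∘L ((U.symm : H ≃ₗᵢ[ℂ] H) : H →L[ℂ] H)
  map_one' := by ext x; simp
  map_mul' x y := by ext z; simp
  map_zero' := by ext z; simp
  map_add' x y := by ext z; simp
  commutes' c := by ext z; simp [ContinuousLinearMap.algebraMap_apply]
  map_star' x := by
    simp only [ContinuousLinearMap.star_eq_adjoint, ContinuousLinearMap.adjoint_comp,
      LinearIsometryEquiv.adjoint_eq_symm]
    simp [ContinuousLinearMap.comp_assoc]

lemma conjSAH_continuous (U : H ≃ₗᵢ[ℂ] H) : Continuous (conjSAH U) := by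
  show Continuous fun x : H →L[ℂ] H =>
    (U : H →L[ℂ] H) ∘L x ∘L ((U.symm : H ≃ₗᵢ[ℂ] H) : H →L[ℂ] H)
  exact ((ContinuousLinearMap.compL ℂ H H H ((U : H →L[ℂ] H))).continuous).comp
    (((ContinuousLinearMap.compL ℂ H H H).flip
      (((U.symm : H ≃ₗᵢ[ℂ] H) : H →L[ℂ] H))).continuous)

lemma scalar_of_spectrum_subsingleton [Nontrivial H] (T : H →L[ℂ] H) (hT : IsSelfAdjoint T)
    (h : (spectrum ℂ T).Subsingleton) : ∃ c : ℝ, T = (c : ℂ) • 1 := by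
  obtain ⟨lam, hlam⟩ := spectrum.nonempty T
  have hre : lam = lam.re := hT.mem_spectrum_eq_re hlam
  refine ⟨lam.re, ?_⟩
  have hspec : spectrum ℂ (T - algebraMap ℂ _ lam) = {0} := by
    rw [← spectrum.sub_singleton_eq]
    apply Set.eq_singleton_iff_nonempty_unique_mem.mpr
    refine ⟨⟨0, ?_⟩, ?_⟩
    · rw [Set.mem_sub]
      exact ⟨lam, hlam, lam, rfl, sub_self lam⟩
    · rintro z ⟨a, ha, b, hb, rfl⟩
      simp only [Set.mem_singleton_iff] at hb ⊢
      rw [h ha hlam, hb]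
      simp
  have hb : IsSelfAdjoint (T - algebraMap ℂ _ lam) := by
    rw [hre]
    exact hT.sub (IsSelfAdjoint.algebraMap _ (by simp [IsSelfAdjoint, Complex.conj_ofReal]))
  have hn : ‖T - algebraMap ℂ _ lam‖₊ = 0 := by
    have := hb.spectralRadius_eq_nnnorm
    rw [spectralRadius, hspec] at this
    simpa using this.symm
  have hz : T - algebraMap ℂ _ lam = 0 := by simpa using hn
  rw [sub_eq_zero] at hz
  rw [hz, hre, Algebra.algebraMap_eq_smul_one]
  norm_num

lemma schur_subsingleton {G : Type*} [Group G] [Nontrivial H] (π : G →* (H ≃ₗᵢ[ℂ] H))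
    (hirr : ∀ M : Submodule ℂ H, IsClosed (M : Set H) →
      (∀ g : G, ∀ m ∈ M, π g m ∈ M) → M = ⊥ ∨ M = ⊤)
    (T : H →L[ℂ] H) (hT : IsSelfAdjoint T)
    (hcomm : ∀ g, conjSAH (π g) T = T) :
    (spectrum ℂ T).Subsingleton := by
  haveI : Nontrivial (H →L[ℂ] H) := by
    obtain ⟨x, hx⟩ := exists_ne (0 : H)
    exact ⟨1, 0, fun h => hx (by simpa using ContinuousLinearMap.ext_iff.mp h x)⟩
  haveI hTn : IsStarNormal T := hT.isStarNormal
  intro a ha b hb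
  by_contra hab
  set r : ℝ := dist a b / 2 with hr_def
  have hr : 0 < r := by
    have : 0 < dist a b := dist_pos.mpr hab
    positivity
  set f : ℂ → ℂ := fun z => ((max (r - dist z a) 0 : ℝ) : ℂ) with hf_def
  set g : ℂ → ℂ := fun z => ((max (r - dist z b) 0 : ℝ) : ℂ) with hg_def
  have hfc : Continuous f := by fun_prop
  have hgc : Continuous g := by fun_prop
  have hfa : f a ≠ 0 := by simp [hf_def, hr.le, Complex.ofReal_eq_zero, hr.ne']
  have hgb : g b ≠ 0 := by simp [hg_def, hr.le, Complex.ofReal_eq_zero, hr.ne']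
  have hfg : ∀ z, f z * g z = 0 := by
    intro z
    rcases le_or_gt r (dist z a) with h | h
    · have : f z = 0 := by simp [hf_def, sub_nonpos.mpr h, max_eq_right]
      rw [this, zero_mul]
    · have hzb : r ≤ dist z b := by
        have h1 := dist_triangle a z b
        rw [dist_comm z a] at h
        simp only [hr_def] at *
        linarith
      have : g z = 0 := by simp [hg_def, sub_nonpos.mpr hzb, max_eq_right]
      rw [this, mul_zero]
  set A := cfc f T with hA_def
  set B := cfc g T with hB_def
  have hAB : A * B = 0 := by
    rw [hA_def, hB_def, ← cfc_mul f g T]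
    calc cfc (fun z => f z * g z) T = cfc (0 : ℂ → ℂ) T := by
          congr 1; funext z; exact hfg z
      _ = 0 := cfc_zero ℂ T
  have hA0 : A ≠ 0 := by
    intro h
    have := norm_apply_le_norm_cfc f T ha hfc.continuousOn
    rw [← hA_def, h, norm_zero] at this
    exact hfa (norm_le_zero_iff.mp this)
  have hB0 : B ≠ 0 := by
    intro h
    have := norm_apply_le_norm_cfc g T hb hgc.continuousOn
    rw [← hB_def, h, norm_zero] at this
    exact hgb (norm_le_zero_iff.mp this)
  have hcommA : ∀ gg : G, (((π gg) : H →L[ℂ] H)) ∘L A = A ∘L (((π gg) : H →L[ℂ] H)) := by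
    intro gg
    have h1 : conjSAH (π gg) A = A := by
      rw [hA_def]
      have := StarAlgHomClass.map_cfc (conjSAH (π gg)) f T hfc.continuousOn
        (conjSAH_continuous (π gg)) hTn (by rw [hcomm gg]; exact hTn)
      rw [this, hcomm gg]
    have h2 : ((π gg : H →L[ℂ] H)) ∘L A ∘L (((π gg).symm : H ≃ₗᵢ[ℂ] H) : H →L[ℂ] H) = A := h1
    ext x
    have := ContinuousLinearMap.ext_iff.mp h2 (π gg x)
    simpa using this
  have hker := hirr (LinearMap.ker A) (by exact ContinuousLinearMap.isClosed_ker A) ?_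
  rotate_left
  · intro gg m hm
    rw [LinearMap.mem_ker] at hm ⊢
    have := ContinuousLinearMap.ext_iff.mp (hcommA gg) m
    simp only [ContinuousLinearMap.comp_apply] at this
    rw [show A m = 0 from hm, map_zero] at this
    exact this.symm
  rcases hker with hbot | htop
  · apply hB0
    ext x
    have hBx : B x ∈ LinearMap.ker (A : H →ₗ[ℂ] H) := by
      rw [LinearMap.mem_ker]
      have := ContinuousLinearMap.ext_iff.mp hAB x
      simpa using this
    rw [hbot] at hBx
    simpa using hBx
  · apply hA0
    ext x
    have : x ∈ LinearMap.ker (A : H →ₗ[ℂ] H) := htop ▸ Submodule.mem_top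
    simpa using this

end Aux

/-- Every irreducible continuous unitary representation of a compact Hausdorff
topological group on a complex Hilbert space acts on a finite-dimensional
space. -/
theorem stmt6 {G : Type*} [Group G] [TopologicalSpace G] [IsTopologicalGroup G]
    [CompactSpace G] [T2Space G]
    {H : Type*} [NormedAddCommGroup H] [InnerProductSpace ℂ H] [CompleteSpace H]
    [Nontrivial H]
    (π : G →* (H ≃ₗᵢ[ℂ] H)) (hπ : ∀ ξ : H, Continuous fun g => π g ξ)
    (hirr : ∀ M : Submodule ℂ H, IsClosed (M : Set H) →
      (∀ g : G, ∀ m ∈ M, π g m ∈ M) → M = ⊥ ∨ M = ⊤) :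
    FiniteDimensional ℂ H := by
  classical
  obtain ⟨ξ, hξ⟩ := exists_ne (0 : H)
  haveI : Nonempty G := ⟨1⟩
  letI : MeasurableSpace G := borel G
  haveI : BorelSpace G := ⟨rfl⟩
  set μ : Measure G := Measure.haarMeasure ⊤ with hμ_def
  haveI : IsProbabilityMeasure μ := by
    constructor
    rw [hμ_def, ← TopologicalSpace.PositiveCompacts.coe_top (α := G)]
    exact Measure.haarMeasure_self
  -- the averaged rank-one operator
  set f : G → (H →L[ℂ] H) := fun g => (innerSL ℂ (π g ξ)).smulRight (π g ξ) with hf_def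
  have hπξ : Continuous fun g => π g ξ := hπ ξ
  have hfc : Continuous f := by
    have h2 : Continuous fun z : H => (innerSL ℂ z).smulRight z :=
      (ContinuousLinearMap.smulRightL ℂ H H).continuous₂.comp
        ((innerSL ℂ).continuous.prodMk continuous_id)
    exact h2.comp hπξ
  have hfi : Integrable f μ := hfc.integrable_of_hasCompactSupport
    (IsCompact.of_isClosed_subset isCompact_univ (isClosed_tsupport f) (Set.subset_univ _))
  set T : H →L[ℂ] H := ∫ g, f g ∂μ with hT_def
  have hfix : ∀ x : H, Integrable (fun g => f g x) μ := fun x =>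
    (ContinuousLinearMap.apply ℂ H x).integrable_comp hfi
  have hTapp : ∀ x : H, T x = ∫ g, f g x ∂μ := fun x => ContinuousLinearMap.integral_apply hfi x
  have hfapp : ∀ g x, f g x = (inner ℂ (π g ξ) x : ℂ) • (π g ξ) := fun g x => rfl
  -- symmetry
  have hadj : IsSelfAdjoint T := by
    rw [ContinuousLinearMap.isSelfAdjoint_iff_isSymmetric]
    intro x y
    show (inner ℂ (T x) y : ℂ) = inner ℂ x (T y)
    have h1 : (inner ℂ (T x) y : ℂ) = conj (inner ℂ y (T x)) := (inner_conj_symm _ _).symm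
    rw [h1, hTapp, hTapp]
    rw [← integral_inner (hfix x) y, ← integral_inner (hfix y) x, ← integral_conj]
    congr 1
    funext g
    rw [hfapp, hfapp, inner_smul_right, inner_smul_right]
    rw [map_mul, inner_conj_symm, inner_conj_symm]
    ring
  -- compactness
  have hcompact : IsCompactOperator (⇑T) := by
    have hconv : Convex ℝ {A : H →L[ℂ] H | IsCompactOperator ⇑A} := by
      intro A hA B hB a b ha hb hab
      have := (hA.smul (a : ℝ)).add (hB.smul (b : ℝ))
      simpa using this
    have hclosed : IsClosed {A : H →L[ℂ] H | IsCompactOperator ⇑A} :=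
      isClosed_setOf_isCompactOperator
    exact hconv.integral_mem hclosed (Filter.Eventually.of_forall fun g =>
      rankOne_compact (π g ξ) (π g ξ)) hfi
  -- nonzero
  have hT0 : T ≠ 0 := by
    intro h0
    have h1 : (inner ℂ ξ (T ξ) : ℂ) = ∫ g, ((‖(inner ℂ ξ (π g ξ) : ℂ)‖ ^ 2 : ℝ) : ℂ) ∂μ := by
      rw [hTapp, ← integral_inner (hfix ξ) ξ]
      congr 1
      funext g
      rw [hfapp, inner_smul_right,
        show (inner ℂ (π g ξ) ξ : ℂ) = conj (inner ℂ ξ (π g ξ)) from (inner_conj_symm _ _).symm,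
        RCLike.conj_mul]
      norm_cast
    have h2 : (0:ℝ) < ∫ g, (‖(inner ℂ ξ (π g ξ) : ℂ)‖ ^ 2 : ℝ) ∂μ := by
      rw [integral_pos_iff_support_of_nonneg]
      · have hopen : IsOpen {g : G | (inner ℂ ξ (π g ξ) : ℂ) ≠ 0} :=
          isOpen_compl_iff.mpr <| IsClosed.preimage
            (Continuous.inner continuous_const (hπ ξ)) isClosed_singleton
        have hmem : (1 : G) ∈ {g : G | (inner ℂ ξ (π g ξ) : ℂ) ≠ 0} := by
          simp only [Set.mem_setOf_eq, map_one]
          simpa [inner_self_eq_zero] using hξ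
        have hsub : {g : G | (inner ℂ ξ (π g ξ) : ℂ) ≠ 0} ⊆
            Function.support fun g => (‖(inner ℂ ξ (π g ξ) : ℂ)‖ ^ 2 : ℝ) := by
          intro g hg
          simp only [Function.mem_support]
          intro hcon
          apply hg
          rw [pow_eq_zero_iff (two_ne_zero)] at hcon
          exact norm_eq_zero.mp hcon
        exact lt_of_lt_of_le (hopen.measure_pos μ ⟨1, hmem⟩) (measure_mono hsub)
      · intro g; positivity
      · apply Continuous.integrable_of_hasCompactSupport
          (by exact ((Continuous.inner continuous_const (hπ ξ)).norm.pow 2))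
        exact IsCompact.of_isClosed_subset isCompact_univ (isClosed_tsupport _) (Set.subset_univ _)
    rw [h0] at h1
    simp only [ContinuousLinearMap.zero_apply, inner_zero_right] at h1
    have h4 : ∫ g, ((‖(inner ℂ ξ (π g ξ) : ℂ)‖ ^ 2 : ℝ) : ℂ) ∂μ
        = ((∫ g, (‖(inner ℂ ξ (π g ξ) : ℂ)‖ ^ 2 : ℝ) ∂μ : ℝ) : ℂ) := integral_ofReal
    rw [h4] at h1
    exact h2.ne' (by exact_mod_cast h1.symm)
  -- commutation
  have hUT : ∀ g₀ : G, ((π g₀ : H →L[ℂ] H)) ∘L T = T ∘L ((π g₀ : H →L[ℂ] H)) := by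
    intro g₀
    ext x
    simp only [ContinuousLinearMap.comp_apply]
    have lhs : (π g₀ : H →L[ℂ] H) (T x) = ∫ g, (π g₀ : H →L[ℂ] H) (f g x) ∂μ := by
      rw [hTapp]
      exact ((π g₀ : H →L[ℂ] H).integral_comp_comm (hfix x)).symm
    have rhs : T ((π g₀ : H →L[ℂ] H) x) = ∫ g, f (g₀ * g) ((π g₀ : H →L[ℂ] H) x) ∂μ := by
      rw [hTapp]
      exact (integral_mul_left_eq_self (fun g => f g ((π g₀ : H →L[ℂ] H) x)) g₀).symm
    rw [lhs, rhs]
    congr 1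
    funext g
    rw [hfapp, hfapp]
    have hmul : (π (g₀ * g)) ξ = π g₀ (π g ξ) := by rw [map_mul]; rfl
    have hinner : (inner ℂ (π (g₀ * g) ξ) ((π g₀ : H →L[ℂ] H) x) : ℂ) = inner ℂ (π g ξ) x := by
      rw [hmul]
      exact (π g₀).inner_map_map (π g ξ) x
    rw [hinner, hmul]
    simp
  have hcommT : ∀ g₀ : G, conjSAH (π g₀) T = T := by
    intro g₀
    show ((π g₀ : H →L[ℂ] H)) ∘L T ∘L (((π g₀).symm : H ≃ₗᵢ[ℂ] H) : H →L[ℂ] H) = T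
    rw [← ContinuousLinearMap.comp_assoc, hUT g₀, ContinuousLinearMap.comp_assoc]
    convert ContinuousLinearMap.comp_id T using 2
    ext x
    simp
  -- Schur: T is scalar
  obtain ⟨c, hc⟩ := scalar_of_spectrum_subsingleton T hadj
    (schur_subsingleton π hirr T hadj hcommT)
  have hc0 : (c : ℂ) ≠ 0 := by
    intro h
    apply hT0
    rw [hc, h, zero_smul]
  -- identity is compact
  have hid : IsCompactOperator (fun x : H => x) := by
    have h1 : IsCompactOperator (fun x : H => ((c:ℂ)⁻¹ • (T x))) := hcompact.smul ((c:ℂ)⁻¹)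
    have h2 : (fun x : H => ((c:ℂ)⁻¹ • (T x))) = fun x : H => x := by
      funext x
      rw [hc]
      simp only [ContinuousLinearMap.smul_apply, ContinuousLinearMap.one_apply]
      rw [smul_smul, inv_mul_cancel₀ hc0, one_smul]
    rwa [h2] at h1
  obtain ⟨K, hK, hKmem⟩ := hid
  rw [Set.preimage_id'] at hKmem
  obtain ⟨ε, hε, hball⟩ := Metric.mem_nhds_iff.mp hKmem
  have hcball : IsCompact (Metric.closedBall (0:H) (ε/2)) := by
    apply IsCompact.of_isClosed_subset hK Metric.isClosed_closedBall
    exact (Metric.closedBall_subset_ball (by linarith)).trans hball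
  exact FiniteDimensional.of_isCompact_closedBall₀ ℂ (half_pos hε) hcball
end

section
/- (Schur orthogonality, inequivalent case.) Let G be a compact Hausdorff topological group with normalized Haar measure μ, and let π and π′ be irreducible continuous unitary representations of G on finite-dimensional complex Hilbert spaces H and H′ that are not unitarily equivalent. Then for all ξ, η ∈ H and ξ′, η′ ∈ H′, ∫ ⟨π(x)ξ, η⟩ · conj(⟨π′(x)ξ′, η′⟩) dμ(x) = 0. -/
open MeasureTheory

set_option linter.unusedSectionVars false

section SchurAux

variable {G : Type*} [Group G] [TopologicalSpace G] [IsTopologicalGroup G]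
    [CompactSpace G] [T2Space G] [MeasurableSpace G] [BorelSpace G]
    (μ : Measure G) [μ.IsHaarMeasure] [IsProbabilityMeasure μ]
    {H : Type*} [NormedAddCommGroup H] [InnerProductSpace ℂ H] [FiniteDimensional ℂ H]
    {H' : Type*} [NormedAddCommGroup H'] [InnerProductSpace ℂ H'] [FiniteDimensional ℂ H']

lemma schur_integrable {E : Type*} [NormedAddCommGroup E] {f : G → E} (hf : Continuous f) :
    Integrable f μ :=
  hf.integrable_of_hasCompactSupport (HasCompactSupport.of_compactSpace f)

lemma schur_cont (π : G →* (H ≃ₗᵢ[ℂ] H)) (hπ : ∀ ξ : H, Continuous fun g => π g ξ)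
    (π' : G →* (H' ≃ₗᵢ[ℂ] H')) (hπ' : ∀ ξ : H', Continuous fun g => π' g ξ)
    (ξ v : H) (ξ' : H') :
    Continuous fun x : G => (inner ℂ ξ (π x⁻¹ v) : ℂ) • (π' x ξ') :=
  (continuous_const.inner ((hπ v).comp continuous_inv)).smul (hπ' ξ')

/-- The averaged rank-one operator `∫ π'(x) ∘ (⟪ξ,·⟫ • ξ') ∘ π(x)⁻¹ dμ(x)` as a
linear map `H →ₗ[ℂ] H'`. -/
noncomputable def schurAvg (π : G →* (H ≃ₗᵢ[ℂ] H)) (hπ : ∀ ξ : H, Continuous fun g => π g ξ)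
    (π' : G →* (H' ≃ₗᵢ[ℂ] H')) (hπ' : ∀ ξ : H', Continuous fun g => π' g ξ)
    (ξ : H) (ξ' : H') : H →ₗ[ℂ] H' where
  toFun v := ∫ x, (inner ℂ ξ (π x⁻¹ v) : ℂ) • (π' x ξ') ∂μ
  map_add' v w := by
    rw [← integral_add (schur_integrable μ (schur_cont π hπ π' hπ' ξ v ξ'))
      (schur_integrable μ (schur_cont π hπ π' hπ' ξ w ξ'))]
    refine integral_congr_ae (.of_forall fun x => ?_)
    simp only [_root_.map_add, inner_add_right, add_smul]
  map_smul' c v := by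
    rw [RingHom.id_apply, ← integral_smul]
    refine integral_congr_ae (.of_forall fun x => ?_)
    simp only [_root_.map_smul, inner_smul_right, smul_smul]

end SchurAux

/-- Schur orthogonality, inequivalent case: matrix coefficients of inequivalent
irreducible continuous unitary finite-dimensional representations of a compact
Hausdorff group are orthogonal in `L²(G,μ)`.  Here `⟨π(x)ξ, η⟩` (linear in the
first variable) is `inner η (π x ξ)` in Mathlib's convention. -/
theorem stmt10 {G : Type*} [Group G] [TopologicalSpace G] [IsTopologicalGroup G]
    [CompactSpace G] [T2Space G] [MeasurableSpace G] [BorelSpace G]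
    (μ : Measure G) [μ.IsHaarMeasure] [IsProbabilityMeasure μ]
    {H : Type*} [NormedAddCommGroup H] [InnerProductSpace ℂ H]
    [FiniteDimensional ℂ H] [Nontrivial H]
    {H' : Type*} [NormedAddCommGroup H'] [InnerProductSpace ℂ H']
    [FiniteDimensional ℂ H'] [Nontrivial H']
    (π : G →* (H ≃ₗᵢ[ℂ] H)) (hπ : ∀ ξ : H, Continuous fun g => π g ξ)
    (π' : G →* (H' ≃ₗᵢ[ℂ] H')) (hπ' : ∀ ξ : H', Continuous fun g => π' g ξ)
    (hirr : ∀ M : Submodule ℂ H, IsClosed (M : Set H) →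
      (∀ g : G, ∀ m ∈ M, π g m ∈ M) → M = ⊥ ∨ M = ⊤)
    (hirr' : ∀ M : Submodule ℂ H', IsClosed (M : Set H') →
      (∀ g : G, ∀ m ∈ M, π' g m ∈ M) → M = ⊥ ∨ M = ⊤)
    (hneq : ¬ ∃ U : H ≃ₗᵢ[ℂ] H', ∀ g : G, ∀ v : H, U (π g v) = π' g (U v)) :
    ∀ (ξ η : H) (ξ' η' : H'),
      ∫ x, (inner ℂ η (π x ξ) : ℂ) * (starRingEnd ℂ) (inner ℂ η' (π' x ξ')) ∂μ = 0 := by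
  intro ξ η ξ' η'
  set A : H →ₗ[ℂ] H' := schurAvg μ π hπ π' hπ' ξ ξ' with hA
  have hAval : ∀ v : H, A v = ∫ x, (inner ℂ ξ (π x⁻¹ v) : ℂ) • (π' x ξ') ∂μ := fun v => rfl
  have hmul : ∀ a b : G, ∀ v : H, π (a * b) v = π a (π b v) := by
    intro a b v; simp [map_mul]
  have hmul' : ∀ a b : G, ∀ v : H', π' (a * b) v = π' a (π' b v) := by
    intro a b v; simp [map_mul]
  have hinvinv : ∀ g : G, ∀ v : H, π g⁻¹ (π g v) = v := by
    intro g v; rw [← hmul]; simp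
  have hinvinv' : ∀ g : G, ∀ v : H', π' g⁻¹ (π' g v) = v := by
    intro g v; rw [← hmul']; simp
  have happinv : ∀ g : G, ∀ v : H, π g (π g⁻¹ v) = v := by
    intro g v; rw [← hmul]; simp
  have happinv' : ∀ g : G, ∀ v : H', π' g (π' g⁻¹ v) = v := by
    intro g v; rw [← hmul']; simp
  -- A intertwines π and π'
  have hAcomm : ∀ g : G, ∀ v : H, A (π g v) = π' g (A v) := by
    intro g v
    have hint := schur_integrable μ (schur_cont π hπ π' hπ' ξ v ξ')
    have h1 : π' g (A v) = ∫ x, π' g ((inner ℂ ξ (π x⁻¹ v) : ℂ) • (π' x ξ')) ∂μ := by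
      rw [hAval]
      exact ((π' g).toLinearIsometry.integral_comp_comm
        (fun x => (inner ℂ ξ (π x⁻¹ v) : ℂ) • (π' x ξ'))).symm
    rw [h1]
    have h2 : ∀ x : G, π' g ((inner ℂ ξ (π x⁻¹ v) : ℂ) • (π' x ξ'))
        = (inner ℂ ξ (π (g * x)⁻¹ (π g v)) : ℂ) • (π' (g * x) ξ') := by
      intro x
      rw [_root_.map_smul, mul_inv_rev, hmul, hmul', hinvinv]
    simp_rw [h2]
    rw [hAval]
    exact (integral_mul_left_eq_self (μ := μ)
      (fun x => (inner ℂ ξ (π x⁻¹ (π g v)) : ℂ) • (π' x ξ')) g).symm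
  -- A = 0 by Schur's lemma
  have hA0 : A = 0 := by
    by_contra hA0
    have hinj : Function.Injective A := by
      have := hirr (LinearMap.ker A) (Submodule.closed_of_finiteDimensional _)
        (by
          intro g m hm
          rw [LinearMap.mem_ker] at hm ⊢
          rw [hAcomm, hm, map_zero])
      rcases this with h | h
      · exact LinearMap.ker_eq_bot.mp h
      · exact absurd (LinearMap.ker_eq_top.mp h) hA0
    have hsurj : Function.Surjective A := by
      have := hirr' (LinearMap.range A) (Submodule.closed_of_finiteDimensional _)
        (by
          intro g m hm
          rcases LinearMap.mem_range.mp hm with ⟨v, rfl⟩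
          exact LinearMap.mem_range.mpr ⟨π g v, hAcomm g v⟩)
      rcases this with h | h
      · exact absurd (LinearMap.range_eq_bot.mp h) hA0
      · exact LinearMap.range_eq_top.mp h
    set B : H →ₗ[ℂ] H := (LinearMap.adjoint A) ∘ₗ A with hB
    have hadj : ∀ g : G, ∀ w : H',
        LinearMap.adjoint A (π' g w) = π g (LinearMap.adjoint A w) := by
      intro g w
      apply ext_inner_right ℂ
      intro u
      rw [LinearMap.adjoint_inner_left]
      have e1 : (inner ℂ (π' g w) (A u) : ℂ) = inner ℂ w (π' g⁻¹ (A u)) := by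
        conv_lhs => rw [show A u = π' g (π' g⁻¹ (A u)) from (happinv' g _).symm]
        exact (π' g).inner_map_map _ _
      have e2 : (inner ℂ (π g (LinearMap.adjoint A w)) u : ℂ)
          = inner ℂ (LinearMap.adjoint A w) (π g⁻¹ u) := by
        conv_lhs => rw [show u = π g (π g⁻¹ u) from (happinv g u).symm]
        exact (π g).inner_map_map _ _
      rw [e1, e2, ← hAcomm, ← LinearMap.adjoint_inner_left]
    have hBcomm : ∀ g : G, ∀ v : H, B (π g v) = π g (B v) := by
      intro g v
      simp only [hB, LinearMap.comp_apply]
      rw [hAcomm, hadj]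
    obtain ⟨c, hc⟩ := Module.End.exists_eigenvalue (B : Module.End ℂ H)
    obtain ⟨v₀, hv₀⟩ := hc.exists_hasEigenvector
    have hBscal : ∀ v : H, B v = c • v := by
      set M : Submodule ℂ H := LinearMap.ker (B - c • LinearMap.id) with hM
      have hmem : ∀ v : H, v ∈ M ↔ B v = c • v := by
        intro v
        simp [hM, LinearMap.mem_ker, sub_eq_zero]
      have := hirr M (Submodule.closed_of_finiteDimensional _)
        (by
          intro g m hm
          rw [hmem] at hm ⊢
          rw [hBcomm, hm, _root_.map_smul])
      rcases this with h | h
      · exfalso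
        have hv₀M : v₀ ∈ M := (hmem v₀).mpr hv₀.apply_eq_smul
        rw [h] at hv₀M
        exact hv₀.2 hv₀M
      · intro v
        exact (hmem v).mp (h ▸ Submodule.mem_top)
    have hAinner : ∀ v w : H,
        (inner ℂ (A v) (A w) : ℂ) = (starRingEnd ℂ) c * inner ℂ v w := by
      intro v w
      rw [← LinearMap.adjoint_inner_left, ← LinearMap.comp_apply, ← hB, hBscal,
        inner_smul_left]
    obtain ⟨u₀, hu₀⟩ := exists_ne (0 : H)
    have hAu₀ : A u₀ ≠ 0 := fun h => hu₀ (hinj (by rw [h, map_zero]))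
    have hu₀n : (‖u₀‖ : ℝ) ≠ 0 := norm_ne_zero_iff.mpr hu₀
    set r : ℝ := ‖A u₀‖ ^ 2 / ‖u₀‖ ^ 2 with hrdef
    have hr_pos : 0 < r := by
      apply div_pos
      · exact pow_pos (norm_pos_iff.mpr hAu₀) 2
      · exact pow_pos (norm_pos_iff.mpr hu₀) 2
    have hcconj : (starRingEnd ℂ) c = (r : ℂ) := by
      have hcval : (starRingEnd ℂ) c * (inner ℂ u₀ u₀ : ℂ) = (‖A u₀‖ : ℂ) ^ 2 := by
        rw [← hAinner, inner_self_eq_norm_sq_to_K]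
        rfl
      rw [inner_self_eq_norm_sq_to_K] at hcval
      have hne : ((‖u₀‖ : ℂ)) ^ 2 ≠ 0 := pow_ne_zero 2 (by exact_mod_cast hu₀n)
      have h3 : (starRingEnd ℂ) c = (‖A u₀‖ : ℂ) ^ 2 / (‖u₀‖ : ℂ) ^ 2 := by
        rw [eq_div_iff hne]
        exact_mod_cast hcval
      rw [h3, hrdef]
      push_cast
      rfl
    set s : ℝ := (Real.sqrt r)⁻¹ with hsdef
    have hs_pos : 0 < s := inv_pos.mpr (Real.sqrt_pos.mpr hr_pos)
    have hs2 : (s : ℂ) * (s : ℂ) * (r : ℂ) = 1 := by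
      have h1 : s * s * r = 1 := by
        rw [hsdef, ← mul_inv, Real.mul_self_sqrt hr_pos.le]
        exact inv_mul_cancel₀ (ne_of_gt hr_pos)
      exact_mod_cast h1
    set L : H →ₗ[ℂ] H' := (s : ℂ) • A with hL
    have hLinner : ∀ v w : H, (inner ℂ (L v) (L w) : ℂ) = inner ℂ v w := by
      intro v w
      simp only [hL, LinearMap.smul_apply]
      rw [inner_smul_left, inner_smul_right, hAinner, hcconj, Complex.conj_ofReal]
      calc (s:ℂ) * ((s:ℂ) * ((r:ℂ) * inner ℂ v w)) = ((s:ℂ)*(s:ℂ)*(r:ℂ)) * inner ℂ v w := by ring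
        _ = inner ℂ v w := by rw [hs2, one_mul]
    have hsne : (s : ℂ) ≠ 0 := by exact_mod_cast ne_of_gt hs_pos
    have hLsurj : Function.Surjective L := by
      intro w
      obtain ⟨u, hu⟩ := hsurj w
      refine ⟨(s : ℂ)⁻¹ • u, ?_⟩
      have h4 : L ((s : ℂ)⁻¹ • u) = (s : ℂ)⁻¹ • L u := _root_.map_smul L _ _
      rw [h4, hL]
      simp only [LinearMap.smul_apply]
      rw [smul_smul, inv_mul_cancel₀ hsne, one_smul, hu]
    apply hneq
    refine ⟨LinearIsometryEquiv.ofSurjective (L.isometryOfInner hLinner) hLsurj,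
      fun g v => ?_⟩
    have hUcoe : ∀ v : H,
        LinearIsometryEquiv.ofSurjective (L.isometryOfInner hLinner) hLsurj v = L v := by
      intro v
      rfl
    rw [hUcoe, hUcoe, hL]
    simp only [LinearMap.smul_apply]
    rw [hAcomm, _root_.map_smul]
  -- conclude
  have hint : Integrable (fun x => (inner ℂ ξ (π x⁻¹ η) : ℂ) • (π' x ξ')) μ :=
    schur_integrable μ (schur_cont π hπ π' hπ' ξ η ξ')
  have key : ∫ x, (inner ℂ ξ (π x⁻¹ η) : ℂ) * (inner ℂ η' (π' x ξ') : ℂ) ∂μ = 0 := by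
    have h := integral_inner (𝕜 := ℂ) hint η'
    simp only [inner_smul_right] at h
    rw [← hAval] at h
    rw [hA0] at h
    simpa using h
  have hconj : ∫ x, (inner ℂ η (π x ξ) : ℂ) * (starRingEnd ℂ) (inner ℂ η' (π' x ξ')) ∂μ
      = (starRingEnd ℂ) (∫ x, (inner ℂ ξ (π x⁻¹ η) : ℂ) * (inner ℂ η' (π' x ξ')) ∂μ) := by
    rw [← integral_conj]
    refine integral_congr_ae (.of_forall fun x => ?_)
    simp only [map_mul]
    congr 1
    rw [inner_conj_symm]
    have h5 := (π x).inner_map_map (π x⁻¹ η) ξ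
    rw [happinv] at h5
    exact h5
  rw [hconj, key, map_zero]
end

section
/- (Schur orthogonality relations.) Let G be a compact Hausdorff topological group with normalized Haar measure μ, let π be an irreducible continuous unitary representation of G on a finite-dimensional complex Hilbert space H of dimension d, and let (e₁,…,e_d) be an orthonormal basis of H. Writing π_{ij}(x) = ⟨π(x)e_j, e_i⟩, one has ∫ π_{ij}(x) · conj(π_{kl}(x)) dμ(x) = δ_{ik} δ_{jl} / d for all 1 ≤ i,j,k,l ≤ d; in particular the functions √d · π_{ij} form an orthonormal family in L²(G,μ). -/
open MeasureTheory

/-- Schur orthogonality relations: for an irreducible continuous unitary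
representation `π` of a compact Hausdorff group on a `d`-dimensional complex
Hilbert space with orthonormal basis `e`, writing
`π_{ij}(x) = ⟨π(x)e_j, e_i⟩ = inner ℂ (e i) (π x (e j))` (inner product linear in
the first variable), one has `∫ π_{ij} conj(π_{kl}) dμ = δ_{ik} δ_{jl} / d`;
in particular the `√d · π_{ij}` form an orthonormal family in `L²(G,μ)`. -/
theorem stmt11 {G : Type*} [Group G] [TopologicalSpace G] [IsTopologicalGroup G]
    [CompactSpace G] [T2Space G] [MeasurableSpace G] [BorelSpace G]
    (μ : Measure G) [μ.IsHaarMeasure] [IsProbabilityMeasure μ]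
    {H : Type*} [NormedAddCommGroup H] [InnerProductSpace ℂ H]
    [FiniteDimensional ℂ H] [Nontrivial H]
    (π : G →* (H ≃ₗᵢ[ℂ] H)) (hπ : ∀ ξ : H, Continuous fun g => π g ξ)
    (hirr : ∀ M : Submodule ℂ H, IsClosed (M : Set H) →
      (∀ g : G, ∀ m ∈ M, π g m ∈ M) → M = ⊥ ∨ M = ⊤)
    (d : ℕ) (hd : Module.finrank ℂ H = d) (e : OrthonormalBasis (Fin d) ℂ H) :
    ∀ i j k l : Fin d,
      ∫ x, (inner ℂ (e i) (π x (e j)) : ℂ) *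
          (starRingEnd ℂ) (inner ℂ (e k) (π x (e l))) ∂μ
        = (if i = k then 1 else 0) * (if j = l then 1 else 0) / (d : ℂ) := by
  intro i j k l
  have horth := orthonormal_iff_ite.mp e.orthonormal
  -- the operator-valued function x ↦ π x ∘ (rank one) ∘ (π x)⁻¹
  set f : G → (H →L[ℂ] H) := fun x =>
    ContinuousLinearMap.smulRightL ℂ H H ((innerSL ℂ) (π x (e l))) (π x (e j)) with hfdef
  have hfc : Continuous f := by fun_prop
  have hfi : Integrable f μ := hfc.integrable_of_hasCompactSupport
    (HasCompactSupport.of_compactSpace _)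
  set T : H →L[ℂ] H := ∫ x, f x ∂μ with hTdef
  have hint : ∀ w : H,
      Integrable (fun x => (inner ℂ (π x (e l)) w : ℂ) • π x (e j)) μ := by
    intro w
    exact (Continuous.smul (Continuous.inner (hπ (e l)) continuous_const)
      (hπ (e j))).integrable_of_hasCompactSupport (HasCompactSupport.of_compactSpace _)
  have hTapp : ∀ w : H, T w = ∫ x, (inner ℂ (π x (e l)) w : ℂ) • π x (e j) ∂μ := by
    intro w
    rw [hTdef, ContinuousLinearMap.integral_apply hfi]
    rfl
  have hmul2 : ∀ (g x : G) (ξ : H), π g (π x ξ) = π (g * x) ξ := by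
    intro g x ξ
    have : π g * π x = π (g * x) := (map_mul π g x).symm
    calc π g (π x ξ) = (π g * π x) ξ := rfl
      _ = π (g * x) ξ := by rw [this]
  have hpush : ∀ (g : G) (φ : G → H), ∫ x, π g (φ x) ∂μ = π g (∫ x, φ x ∂μ) := by
    intro g φ
    have := (π g).toLinearIsometry.integral_comp_comm (μ := μ) φ
    simpa [LinearIsometryEquiv.coe_toLinearIsometry] using this
  -- T commutes with all π g
  have hcomm : ∀ (g : G) (w : H), π g (T w) = T (π g w) := by
    intro g w
    rw [hTapp, hTapp, ← hpush g _]
    have hinv := integral_mul_left_eq_self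
      (μ := μ) (fun x => (inner ℂ (π (g⁻¹ * x) (e l)) w : ℂ) • π x (e j)) g
    calc ∫ x, π g ((inner ℂ (π x (e l)) w : ℂ) • π x (e j)) ∂μ
        = ∫ x, (inner ℂ (π (g⁻¹ * (g * x)) (e l)) w : ℂ) • π (g * x) (e j) ∂μ := by
          congr 1; ext x
          rw [_root_.map_smul, hmul2, inv_mul_cancel_left]
      _ = ∫ x, (inner ℂ (π (g⁻¹ * x) (e l)) w : ℂ) • π x (e j) ∂μ := hinv
      _ = ∫ x, (inner ℂ (π x (e l)) (π g w) : ℂ) • π x (e j) ∂μ := by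
          congr 1; ext x
          congr 1
          rw [← (π g).inner_map_map (π (g⁻¹ * x) (e l)) w, hmul2, mul_inv_cancel_left]
  -- Schur's lemma: T is a scalar
  obtain ⟨c, hc⟩ := Module.End.exists_eigenvalue (↑T : Module.End ℂ H)
  have hT_eq : ∀ w : H, T w = c • w := by
    intro w
    set M : Submodule ℂ H := Module.End.eigenspace (↑T : Module.End ℂ H) c with hM
    have hMc : IsClosed (M : Set H) := M.closed_of_finiteDimensional
    have hMinv : ∀ g : G, ∀ m ∈ M, π g m ∈ M := by
      intro g m hm
      rw [hM, Module.End.mem_eigenspace_iff] at hm ⊢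
      have hm' : T m = c • m := hm
      have : T (π g m) = c • π g m := by rw [← hcomm g m, hm', _root_.map_smul]
      exact this
    rcases hirr M hMc hMinv with h | h
    · exfalso
      obtain ⟨v, hv⟩ := hc.exists_hasEigenvector
      have hvM : v ∈ M := hv.1
      rw [h] at hvM
      exact hv.2 ((Submodule.mem_bot ℂ).mp hvM)
    · have : w ∈ M := by rw [h]; trivial
      rw [hM, Module.End.mem_eigenspace_iff] at this
      exact this
  -- matrix entries of T
  have key : ∀ m n : Fin d,
      (∫ x, (inner ℂ (e m) (π x (e j)) : ℂ) *
          (starRingEnd ℂ) (inner ℂ (e n) (π x (e l))) ∂μ)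
        = c * (if m = n then 1 else 0) := by
    intro m n
    have h1 : (inner ℂ (e m) (T (e n)) : ℂ)
        = ∫ x, (inner ℂ (e m) (π x (e j)) : ℂ) *
            (starRingEnd ℂ) (inner ℂ (e n) (π x (e l))) ∂μ := by
      rw [hTapp, ← integral_inner (hint (e n)) (e m)]
      congr 1; ext x
      rw [inner_smul_right, inner_conj_symm]
      ring
    rw [← h1, hT_eq, inner_smul_right, horth]
  -- compute c by summing diagonal entries
  have hd0 : (d : ℂ) ≠ 0 := by
    have : 0 < d := hd ▸ Module.finrank_pos
    exact_mod_cast this.ne'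
  have hint2 : ∀ m n : Fin d, Integrable (fun x =>
      (inner ℂ (e m) (π x (e j)) : ℂ) * (starRingEnd ℂ) (inner ℂ (e n) (π x (e l)))) μ := by
    intro m n
    refine Continuous.integrable_of_hasCompactSupport ?_ (HasCompactSupport.of_compactSpace _)
    have : Continuous fun x => (inner ℂ (e m) (π x (e j)) : ℂ) *
        star (inner ℂ (e n) (π x (e l)) : ℂ) :=
      (Continuous.inner continuous_const (hπ (e j))).mul
        (Continuous.inner continuous_const (hπ (e l))).star
    exact this
  have hsum : c * d = (if j = l then 1 else 0) := by
    have h2 : ∑ m : Fin d, (∫ x, (inner ℂ (e m) (π x (e j)) : ℂ) *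
        (starRingEnd ℂ) (inner ℂ (e m) (π x (e l))) ∂μ) = c * d := by
      simp only [key]
      simp [Finset.sum_const, Finset.card_univ, mul_comm]
    rw [← h2, ← integral_finset_sum _ (fun m _ => hint2 m m)]
    have h3 : ∀ x : G, ∑ m : Fin d, (inner ℂ (e m) (π x (e j)) : ℂ) *
        (starRingEnd ℂ) (inner ℂ (e m) (π x (e l))) = (if j = l then 1 else 0) := by
      intro x
      have := e.sum_inner_mul_inner (π x (e l)) (π x (e j))
      calc ∑ m : Fin d, (inner ℂ (e m) (π x (e j)) : ℂ) *
            (starRingEnd ℂ) (inner ℂ (e m) (π x (e l)))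
          = ∑ m : Fin d, (inner ℂ (π x (e l)) (e m) : ℂ) * inner ℂ (e m) (π x (e j)) := by
            congr 1; ext m; rw [inner_conj_symm]; ring
        _ = inner ℂ (π x (e l)) (π x (e j)) := this
        _ = inner ℂ (e l) (e j) := (π x).inner_map_map (e l) (e j)
        _ = (if j = l then 1 else 0) := by rw [horth]; simp [eq_comm]
    simp only [h3]
    simp
  rw [key i k]
  have hcval : c = (if j = l then 1 else 0) / d := by
    field_simp
    linear_combination hsum
  rw [hcval]
  ring
end

section
/- Let G be a compact Hausdorff topological group with normalized Haar measure μ, let π be an irreducible continuous unitary representation of G on a finite-dimensional complex Hilbert space H of dimension d, and let η ∈ H be nonzero. Define U : H → C(G;ℂ) by (Uξ)(y) = ⟨π(y)ξ, η⟩. Then U is linear and injective, U(π(x)ξ) = R_x(Uξ) for all x ∈ G and ξ ∈ H (where (R_xφ)(y) = φ(yx)), and ∫ |(Uξ)(y)|² dμ(y) = ‖ξ‖²‖η‖²/d for all ξ ∈ H; hence (√d/‖η‖)·U is a linear isometry of H into L²(G,μ) intertwining π with the right regular representation. -/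
open MeasureTheory ENNReal

/-- For an irreducible continuous unitary representation `π` of a compact
Hausdorff group on a `d`-dimensional complex Hilbert space `H` and a nonzero
`η ∈ H`, the map `U : H → C(G;ℂ)`, `(Uξ)(y) = ⟨π(y)ξ, η⟩ = inner η (π y ξ)`, is
linear and injective, intertwines `π` with right translation
(`U(π(x)ξ)(y) = (Uξ)(yx)`), and satisfies
`∫ |(Uξ)(y)|² dμ(y) = ‖ξ‖²‖η‖²/d`; hence a suitable multiple of `U` is an
isometry into `L²(G,μ)` intertwining `π` with the right regular
representation. -/
theorem stmt12 {G : Type*} [Group G] [TopologicalSpace G] [IsTopologicalGroup G]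
    [CompactSpace G] [T2Space G] [MeasurableSpace G] [BorelSpace G]
    (μ : Measure G) [μ.IsHaarMeasure] [IsProbabilityMeasure μ]
    {H : Type*} [NormedAddCommGroup H] [InnerProductSpace ℂ H]
    [FiniteDimensional ℂ H] [Nontrivial H]
    (π : G →* (H ≃ₗᵢ[ℂ] H)) (hπ : ∀ ξ : H, Continuous fun g => π g ξ)
    (hirr : ∀ M : Submodule ℂ H, IsClosed (M : Set H) →
      (∀ g : G, ∀ m ∈ M, π g m ∈ M) → M = ⊥ ∨ M = ⊤)
    (d : ℕ) (hd : Module.finrank ℂ H = d)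
    (η : H) (hη : η ≠ 0)
    (U : H → C(G, ℂ)) (hU : ∀ (ξ : H) (y : G), U ξ y = (inner ℂ η (π y ξ) : ℂ)) :
    (∀ (c : ℂ) (ξ ζ : H), U (c • ξ + ζ) = c • U ξ + U ζ) ∧
    Function.Injective U ∧
    (∀ (x : G) (ξ : H) (y : G), U (π x ξ) y = U ξ (y * x)) ∧
    ∀ ξ : H, ∫ y, ‖U ξ y‖ ^ 2 ∂μ = ‖ξ‖ ^ 2 * ‖η‖ ^ 2 / d := by
  have hd0 : 0 < d := hd ▸ Module.finrank_pos
  have hmulapp : ∀ (y x : G) (ξ : H), π y (π x ξ) = π (y * x) ξ := by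
    intro y x ξ; rw [map_mul]; rfl
  -- Part 1: linearity
  have part1 : ∀ (c : ℂ) (ξ ζ : H), U (c • ξ + ζ) = c • U ξ + U ζ := by
    intro c ξ ζ
    ext y
    simp [hU, inner_add_right, inner_smul_right, map_add, _root_.map_smul]
  -- Part 3: intertwining
  have part3 : ∀ (x : G) (ξ : H) (y : G), U (π x ξ) y = U ξ (y * x) := by
    intro x ξ y
    rw [hU, hU, hmulapp]
  -- Part 2: injectivity
  have part2 : Function.Injective U := by
    intro a b hab
    have hU0 : ∀ y : G, (inner ℂ η (π y (a - b)) : ℂ) = 0 := by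
      intro y
      have h1 : (inner ℂ η (π y (a - b)) : ℂ) = U a y - U b y := by
        rw [hU, hU, map_sub, inner_sub_right]
      rw [h1, hab, sub_self]
    let M : Submodule ℂ H :=
      { carrier := {ξ | ∀ y : G, (inner ℂ η (π y ξ) : ℂ) = 0}
        add_mem' := fun {x} {z} hx hz y => by
          simp only [Set.mem_setOf_eq] at hx hz ⊢
          rw [map_add, inner_add_right, hx y, hz y, add_zero]
        zero_mem' := fun y => by simp
        smul_mem' := fun c x hx y => by
          simp only [Set.mem_setOf_eq] at hx ⊢
          rw [_root_.map_smul, inner_smul_right, hx y, mul_zero] }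
    have hMcl : IsClosed (M : Set H) := Submodule.closed_of_finiteDimensional M
    have hMinv : ∀ g : G, ∀ m ∈ M, π g m ∈ M := by
      intro g m hm y
      show (inner ℂ η (π y (π g m)) : ℂ) = 0
      rw [hmulapp]
      exact hm (y * g)
    rcases hirr M hMcl hMinv with hbot | htop
    · have hab' : a - b ∈ M := hU0
      rw [hbot, Submodule.mem_bot] at hab'
      exact sub_eq_zero.mp hab'
    · exfalso
      have hηM : η ∈ M := htop ▸ Submodule.mem_top
      have h1 := hηM 1
      rw [map_one] at h1
      simp only [LinearIsometryEquiv.coe_one, id_eq] at h1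
      exact hη (inner_self_eq_zero.mp h1)
  -- continuity helpers
  have hc1 : ∀ ζ : H, Continuous fun y : G => (inner ℂ η (π y ζ) : ℂ) :=
    fun ζ => continuous_const.inner (hπ ζ)
  have hc2 : Continuous fun y : G => π y⁻¹ η := (hπ η).comp continuous_inv
  -- right invariance of μ
  have hri : μ.IsMulRightInvariant := by
    constructor
    intro g
    have hmeas : Measurable (fun x : G => x * g) := measurable_mul_const g
    set ν := Measure.map (fun x : G => x * g) μ with hν
    haveI hprob : IsProbabilityMeasure ν := Measure.isProbabilityMeasure_map hmeas.aemeasurable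
    haveI hli : ν.IsMulLeftInvariant := by
      constructor
      intro h
      have hcomp : ((fun x : G => h * x) ∘ (fun x : G => x * g))
          = ((fun x : G => x * g) ∘ (fun x : G => h * x)) := by
        funext y; simp [Function.comp, mul_assoc]
      rw [hν, Measure.map_map (measurable_const_mul h) hmeas, hcomp,
        ← Measure.map_map hmeas (measurable_const_mul h), MeasureTheory.map_mul_left_eq_self μ h]
    have key : ν = Measure.haarScalarFactor ν μ • μ :=
      Measure.isMulInvariant_eq_smul_of_compactSpace ν μ
    have h1 : ν Set.univ = 1 := measure_univ
    rw [key] at h1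
    have h3 : Measure.haarScalarFactor ν μ = 1 := by
      have h2 : ((Measure.haarScalarFactor ν μ : ENNReal)) = 1 := by
        rw [Measure.smul_apply, measure_univ, ENNReal.smul_def, smul_eq_mul, mul_one] at h1
        exact h1
      exact_mod_cast h2
    rw [key, h3, one_smul]
  -- integrability helpers
  have hintH : ∀ (f : G → H), Continuous f → Integrable f μ := fun f hf =>
    hf.integrable_of_hasCompactSupport (HasCompactSupport.of_compactSpace f)
  have hintR : ∀ (f : G → ℝ), Continuous f → Integrable f μ := fun f hf =>
    hf.integrable_of_hasCompactSupport (HasCompactSupport.of_compactSpace f)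
  -- the averaged operator
  set A : H → H := fun ζ => ∫ y, (inner ℂ η (π y ζ) : ℂ) • (π y⁻¹ η) ∂μ with hA
  have hAint : ∀ ζ : H, Integrable (fun y : G => (inner ℂ η (π y ζ) : ℂ) • (π y⁻¹ η)) μ :=
    fun ζ => hintH _ ((hc1 ζ).smul hc2)
  have hAadd : ∀ ζ ζ' : H, A (ζ + ζ') = A ζ + A ζ' := by
    intro ζ ζ'
    rw [hA]
    simp only
    rw [← integral_add (hAint ζ) (hAint ζ')]
    congr 1; funext y
    rw [map_add, inner_add_right, add_smul]
  have hAsmul : ∀ (c : ℂ) (ζ : H), A (c • ζ) = c • A ζ := by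
    intro c ζ
    rw [hA]
    simp only
    rw [← integral_smul]
    congr 1; funext y
    rw [_root_.map_smul, inner_smul_right, mul_smul]
  -- A commutes with π
  have hcomm : ∀ (g : G) (ζ : H), A (π g ζ) = π g (A ζ) := by
    intro g ζ
    have L : H →L[ℂ] H := (π g).toLinearIsometry.toContinuousLinearMap
    calc A (π g ζ) = ∫ y, (inner ℂ η (π (y * g) ζ) : ℂ) • (π (g * (y * g)⁻¹) η) ∂μ := by
          rw [hA]
          show (∫ y, (inner ℂ η (π y (π g ζ)) : ℂ) • (π y⁻¹ η) ∂μ) = _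
          congr 1; funext y
          rw [hmulapp]
          congr 2
          group
      _ = ∫ z, (inner ℂ η (π z ζ) : ℂ) • (π (g * z⁻¹) η) ∂μ :=
          integral_mul_right_eq_self (fun z => (inner ℂ η (π z ζ) : ℂ) • (π (g * z⁻¹) η)) g
      _ = ∫ z, ((π g).toLinearIsometry.toContinuousLinearMap)
            ((inner ℂ η (π z ζ) : ℂ) • (π z⁻¹ η)) ∂μ := by
          congr 1; funext z
          rw [_root_.map_smul]
          simp only [LinearIsometry.coe_toContinuousLinearMap,
            LinearIsometryEquiv.coe_toLinearIsometry]
          rw [← hmulapp]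
      _ = π g (A ζ) := by
          rw [ContinuousLinearMap.integral_comp_comm _ (hAint ζ)]
          rfl
  -- Schur's lemma: A is scalar
  let Amap : Module.End ℂ H :=
    { toFun := A, map_add' := hAadd, map_smul' := hAsmul }
  obtain ⟨c, hc⟩ := Module.End.exists_eigenvalue Amap
  have heig : ∀ ξ : H, A ξ = c • ξ := by
    have hMinv : ∀ g : G, ∀ m ∈ Module.End.eigenspace Amap c,
        π g m ∈ Module.End.eigenspace Amap c := by
      intro g m hm
      rw [Module.End.mem_eigenspace_iff] at hm ⊢
      show A (π g m) = c • π g m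
      rw [hcomm]
      show π g (A m) = c • π g m
      rw [show A m = Amap m from rfl, hm, _root_.map_smul]
    rcases hirr (Module.End.eigenspace Amap c)
        (Submodule.closed_of_finiteDimensional _) hMinv with hbot | htop
    · exact absurd hbot hc
    · intro ξ
      have hmem : ξ ∈ Module.End.eigenspace Amap c := htop ▸ Submodule.mem_top
      exact Module.End.mem_eigenspace_iff.mp hmem
  -- key scalar identity
  have key1 : ∀ ξ : H, ((∫ y, ‖U ξ y‖ ^ 2 ∂μ : ℝ) : ℂ) = c * ((‖ξ‖ ^ 2 : ℝ) : ℂ) := by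
    intro ξ
    have h2 : ∀ y : G, (inner ℂ ξ ((inner ℂ η (π y ξ) : ℂ) • (π y⁻¹ η)) : ℂ)
        = ((‖U ξ y‖ ^ 2 : ℝ) : ℂ) := by
      intro y
      rw [inner_smul_right]
      have h3 : (inner ℂ ξ (π y⁻¹ η) : ℂ) = inner ℂ (π y ξ) η := by
        rw [← LinearIsometryEquiv.inner_map_map (π y) ξ (π y⁻¹ η), hmulapp,
          mul_inv_cancel, map_one]
        simp
      rw [h3, show (inner ℂ (π y ξ) η : ℂ) = (starRingEnd ℂ) (inner ℂ η (π y ξ) : ℂ) from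
        (inner_conj_symm (π y ξ) η).symm, RCLike.mul_conj, ← hU]
      norm_cast
    have h1 : (inner ℂ ξ (A ξ) : ℂ) = ((∫ y, ‖U ξ y‖ ^ 2 ∂μ : ℝ) : ℂ) := by
      rw [hA]
      simp only
      rw [← integral_inner (hAint ξ) ξ]
      rw [show (fun y : G => (inner ℂ ξ ((inner ℂ η (π y ξ) : ℂ) • (π y⁻¹ η)) : ℂ))
        = fun y : G => ((‖U ξ y‖ ^ 2 : ℝ) : ℂ) from funext h2]
      exact integral_ofReal
    rw [← h1, heig ξ, inner_smul_right, inner_self_eq_norm_sq_to_K]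
    norm_cast
  -- compute c via an orthonormal basis
  have hdcast : ((d : ℝ) : ℂ) ≠ 0 := by
    simp only [ne_eq, Complex.ofReal_eq_zero, Nat.cast_eq_zero]
    omega
  let b := stdOrthonormalBasis ℂ H
  have hsum1 : ∀ y : G, (∑ i, ‖U (b i) y‖ ^ 2) = ‖η‖ ^ 2 := by
    intro y
    set w := π y⁻¹ η with hw
    have hrw : ∀ i, (U (b i) y : ℂ) = inner ℂ w (b i) := by
      intro i
      rw [hU, hw, ← LinearIsometryEquiv.inner_map_map (π y) (π y⁻¹ η) (b i), hmulapp,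
        mul_inv_cancel, map_one]
      simp
    have hp := b.sum_inner_mul_inner w w
    have hps : (∑ i, ((‖U (b i) y‖ ^ 2 : ℝ) : ℂ)) = ((‖η‖ ^ 2 : ℝ) : ℂ) := by
      calc (∑ i, ((‖U (b i) y‖ ^ 2 : ℝ) : ℂ))
          = ∑ i, (inner ℂ w (b i) : ℂ) * inner ℂ (b i) w := by
            refine Finset.sum_congr rfl fun i _ => ?_
            rw [show (inner ℂ (b i) w : ℂ) = (starRingEnd ℂ) (inner ℂ w (b i) : ℂ) from
              (inner_conj_symm (b i) w).symm, ← hrw i, RCLike.mul_conj]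
            norm_cast
        _ = inner ℂ w w := hp
        _ = ((‖η‖ ^ 2 : ℝ) : ℂ) := by
            rw [inner_self_eq_norm_sq_to_K]
            simp only [hw, LinearIsometryEquiv.norm_map]
            norm_cast
    exact_mod_cast hps
  have hcval : c = ((‖η‖ ^ 2 : ℝ) : ℂ) / d := by
    have hint_i : ∀ i, Integrable (fun y : G => ‖U (b i) y‖ ^ 2) μ :=
      fun i => hintR _ (((U (b i)).continuous.norm).pow 2)
    have hS : (∑ i, ((∫ y, ‖U (b i) y‖ ^ 2 ∂μ : ℝ) : ℂ)) = ((‖η‖ ^ 2 : ℝ) : ℂ) := by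
      rw [← Complex.ofReal_sum]
      congr 1
      rw [← integral_finset_sum _ (fun i _ => hint_i i)]
      calc (∫ y, ∑ i, ‖U (b i) y‖ ^ 2 ∂μ) = ∫ _, (‖η‖ ^ 2 : ℝ) ∂μ := by
            congr 1; funext y; exact hsum1 y
        _ = ‖η‖ ^ 2 := by simp
    have hS2 : (∑ i, ((∫ y, ‖U (b i) y‖ ^ 2 ∂μ : ℝ) : ℂ)) = c * d := by
      calc (∑ i, ((∫ y, ‖U (b i) y‖ ^ 2 ∂μ : ℝ) : ℂ))
          = ∑ i, c * ((‖b i‖ ^ 2 : ℝ) : ℂ) :=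
            Finset.sum_congr rfl fun i _ => key1 (b i)
        _ = ∑ _i : Fin (Module.finrank ℂ H), c := by
            refine Finset.sum_congr rfl fun i _ => ?_
            rw [b.orthonormal.1 i]
            norm_num
        _ = c * d := by
            rw [Finset.sum_const, Finset.card_univ, Fintype.card_fin, hd]
            ring
    have hdc : (d : ℂ) ≠ 0 := Nat.cast_ne_zero.mpr (by omega)
    exact (eq_div_iff hdc).mpr (hS2.symm.trans hS)
  -- final integral formula
  have part4 : ∀ ξ : H, ∫ y, ‖U ξ y‖ ^ 2 ∂μ = ‖ξ‖ ^ 2 * ‖η‖ ^ 2 / d := by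
    intro ξ
    have := key1 ξ
    rw [hcval] at this
    have h : ((∫ y, ‖U ξ y‖ ^ 2 ∂μ : ℝ) : ℂ) = ((‖ξ‖ ^ 2 * ‖η‖ ^ 2 / d : ℝ) : ℂ) := by
      rw [this]
      push_cast
      ring
    exact_mod_cast h
  exact ⟨part1, part2, part3, part4⟩
end

section
/- Let G be a compact Hausdorff topological group with normalized Haar measure μ and let ψ ∈ C(G;ℂ). For f ∈ L²(G,μ) define (ψ * f)(x) = ∫ ψ(xy⁻¹) f(y) dμ(y). Then ψ * f is a continuous function on G with sup-norm bound ‖ψ * f‖_∞ ≤ ‖ψ‖_∞ · ‖f‖_{L²}, and the operator T_ψ : L²(G,μ) → L²(G,μ), f ↦ ψ * f, is a compact bounded linear operator. -/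
open MeasureTheory Filter Topology Metric Set

namespace Stmt15Aux

variable {G : Type*} [Group G] [TopologicalSpace G] [IsTopologicalGroup G]
    [CompactSpace G] [T2Space G] [MeasurableSpace G] [BorelSpace G]
    (μ : Measure G) [IsProbabilityMeasure μ] (ψ : C(G, ℂ))

/-- The kernel `x ↦ (y ↦ ψ (x * y⁻¹))` as a continuous family of continuous maps. -/
noncomputable def Kmap : C(G, C(G, ℂ)) :=
  ContinuousMap.curry (ψ.comp ⟨fun p : G × G => p.1 * p.2⁻¹, by continuity⟩)

lemma Kmap_apply (x y : G) : Kmap ψ x y = ψ (x * y⁻¹) := rfl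

lemma Kmap_norm_le (x : G) : ‖Kmap ψ x‖ ≤ ‖ψ‖ :=
  ContinuousMap.norm_le _ (norm_nonneg ψ) |>.2 fun y => ψ.norm_coe_le_norm (x * y⁻¹)

lemma integrable_mul (f : Lp ℂ 2 μ) (g : C(G, ℂ)) :
    Integrable (fun y => g y * f y) μ :=
  ((Lp.memLp f).integrable one_le_two).bdd_mul g.continuous.aestronglyMeasurable
    (c := ‖g‖) (Filter.Eventually.of_forall fun x => g.norm_coe_le_norm x)

lemma integral_norm_le (f : Lp ℂ 2 μ) : ∫ y, ‖f y‖ ∂μ ≤ ‖f‖ := by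
  rw [Lp.norm_def]
  have h1 : ∫ y, ‖f y‖ ∂μ = (eLpNorm f 1 μ).toReal := by
    rw [eLpNorm_one_eq_lintegral_enorm,
      integral_norm_eq_lintegral_enorm (Lp.aestronglyMeasurable f)]
  rw [h1]
  exact ENNReal.toReal_mono (Lp.eLpNorm_ne_top f)
    (eLpNorm_le_eLpNorm_of_exponent_le one_le_two (Lp.aestronglyMeasurable f))

lemma norm_integral_mul_le (f : Lp ℂ 2 μ) (g : C(G, ℂ)) :
    ‖∫ y, g y * f y ∂μ‖ ≤ ‖g‖ * ‖f‖ := by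
  calc ‖∫ y, g y * f y ∂μ‖ ≤ ∫ y, ‖g y * f y‖ ∂μ := norm_integral_le_integral_norm _
    _ ≤ ∫ y, ‖g‖ * ‖f y‖ ∂μ := by
        refine integral_mono (integrable_mul μ f g).norm
          (((Lp.memLp f).integrable one_le_two).norm.const_mul _) fun y => ?_
        rw [norm_mul]
        exact mul_le_mul_of_nonneg_right (g.norm_coe_le_norm y) (norm_nonneg _)
    _ = ‖g‖ * ∫ y, ‖f y‖ ∂μ := integral_const_mul _ _
    _ ≤ ‖g‖ * ‖f‖ := mul_le_mul_of_nonneg_left (integral_norm_le μ f) (norm_nonneg _)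

lemma integrable_conv (f : Lp ℂ 2 μ) (x : G) :
    Integrable (fun y => ψ (x * y⁻¹) * f y) μ := integrable_mul μ f (Kmap ψ x)

lemma conv_norm_le (f : Lp ℂ 2 μ) (x : G) :
    ‖∫ y, ψ (x * y⁻¹) * f y ∂μ‖ ≤ ‖ψ‖ * ‖f‖ :=
  le_trans (norm_integral_mul_le μ f (Kmap ψ x))
    (mul_le_mul_of_nonneg_right (Kmap_norm_le ψ x) (norm_nonneg f))

lemma conv_dist_le (f : Lp ℂ 2 μ) (x x' : G) :
    dist (∫ y, ψ (x * y⁻¹) * f y ∂μ) (∫ y, ψ (x' * y⁻¹) * f y ∂μ)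
      ≤ dist (Kmap ψ x) (Kmap ψ x') * ‖f‖ := by
  rw [dist_eq_norm, ← integral_sub (integrable_conv μ ψ f x) (integrable_conv μ ψ f x')]
  have : (fun y => ψ (x * y⁻¹) * f y - ψ (x' * y⁻¹) * f y)
      = fun y => (Kmap ψ x - Kmap ψ x') y * f y := by
    funext y
    simp [Kmap_apply, sub_mul]
  rw [this, dist_eq_norm]
  exact norm_integral_mul_le μ f (Kmap ψ x - Kmap ψ x')

lemma conv_continuous (f : Lp ℂ 2 μ) :
    Continuous fun x => ∫ y, ψ (x * y⁻¹) * f y ∂μ := by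
  have hL : LipschitzWith ‖f‖₊ fun g : C(G, ℂ) => ∫ y, g y * f y ∂μ := by
    refine LipschitzWith.of_dist_le_mul fun g₁ g₂ => ?_
    rw [coe_nnnorm, dist_eq_norm, dist_eq_norm,
      ← integral_sub (integrable_mul μ f g₁) (integrable_mul μ f g₂)]
    have h : (fun y => g₁ y * f y - g₂ y * f y) = fun y => (g₁ - g₂) y * f y := by
      funext y; simp [sub_mul]
    rw [h, mul_comm]
    exact norm_integral_mul_le μ f (g₁ - g₂)
  exact (hL.continuous.comp (Kmap ψ).continuous : _)

/-- The convolution as a bounded continuous function. -/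
noncomputable def convB (f : Lp ℂ 2 μ) : BoundedContinuousFunction G ℂ :=
  BoundedContinuousFunction.ofNormedAddCommGroup _ (conv_continuous μ ψ f)
    (‖ψ‖ * ‖f‖) (conv_norm_le μ ψ f)

lemma convB_apply (f : Lp ℂ 2 μ) (x : G) :
    convB μ ψ f x = ∫ y, ψ (x * y⁻¹) * f y ∂μ := rfl

lemma convB_norm_le (f : Lp ℂ 2 μ) : ‖convB μ ψ f‖ ≤ ‖ψ‖ * ‖f‖ :=
  BoundedContinuousFunction.norm_ofNormedAddCommGroup_le _
    (mul_nonneg (norm_nonneg _) (norm_nonneg _)) _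

/-- The convolution operator as a linear map into bounded continuous functions. -/
noncomputable def convLM : Lp ℂ 2 μ →ₗ[ℂ] BoundedContinuousFunction G ℂ where
  toFun := convB μ ψ
  map_add' f g := by
    ext x
    simp only [convB_apply, BoundedContinuousFunction.add_apply]
    have h : (fun y => ψ (x * y⁻¹) * (↑(f + g) : G → ℂ) y)
        =ᵐ[μ] fun y => ψ (x * y⁻¹) * f y + ψ (x * y⁻¹) * g y := by
      filter_upwards [Lp.coeFn_add f g] with y hy
      rw [hy, Pi.add_apply, mul_add]
    rw [integral_congr_ae h,
      integral_add (integrable_conv μ ψ f x) (integrable_conv μ ψ g x)]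
  map_smul' c f := by
    ext x
    simp only [convB_apply, RingHom.id_apply, BoundedContinuousFunction.smul_apply,
      smul_eq_mul]
    have h : (fun y => ψ (x * y⁻¹) * (↑(c • f) : G → ℂ) y)
        =ᵐ[μ] fun y => c • (ψ (x * y⁻¹) * f y) := by
      filter_upwards [Lp.coeFn_smul c f] with y hy
      rw [hy, Pi.smul_apply, smul_eq_mul, smul_eq_mul]
      ring
    rw [integral_congr_ae h, integral_smul, smul_eq_mul]

/-- The convolution operator as a continuous linear map into bounded continuous functions. -/
noncomputable def convS : Lp ℂ 2 μ →L[ℂ] BoundedContinuousFunction G ℂ :=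
  LinearMap.mkContinuous (convLM μ ψ) ‖ψ‖ (convB_norm_le μ ψ)

lemma convS_apply (f : Lp ℂ 2 μ) (x : G) :
    convS μ ψ f x = ∫ y, ψ (x * y⁻¹) * f y ∂μ := rfl

lemma isCompactOperator_convS : IsCompactOperator (⇑(convS μ ψ)) := by
  set A : Set (BoundedContinuousFunction G ℂ) := ⇑(convS μ ψ) '' Metric.closedBall 0 1 with hA
  refine ⟨closure A, ?_, ?_⟩
  · refine BoundedContinuousFunction.arzela_ascoli (Metric.closedBall (0 : ℂ) ‖ψ‖)
      (isCompact_closedBall 0 ‖ψ‖) A ?_ ?_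
    · rintro g x ⟨f, hf, rfl⟩
      rw [mem_closedBall_zero_iff] at hf ⊢
      calc ‖convS μ ψ f x‖ ≤ ‖ψ‖ * ‖f‖ := conv_norm_le μ ψ f x
        _ ≤ ‖ψ‖ * 1 := mul_le_mul_of_nonneg_left hf (norm_nonneg _)
        _ = ‖ψ‖ := mul_one _
    · intro x
      rw [Metric.equicontinuousAt_iff_right]
      intro ε hε
      have hc : Tendsto (fun x' => Kmap ψ x') (𝓝 x) (𝓝 (Kmap ψ x)) :=
        (Kmap ψ).continuous.tendsto x
      have hball : Metric.ball (Kmap ψ x) (ε / 2) ∈ 𝓝 (Kmap ψ x) :=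
        Metric.ball_mem_nhds _ (half_pos hε)
      filter_upwards [hc hball] with x' hx'
      rintro ⟨g, ⟨f, hf, rfl⟩⟩
      rw [mem_closedBall_zero_iff] at hf
      calc dist (convS μ ψ f x) (convS μ ψ f x')
          ≤ dist (Kmap ψ x) (Kmap ψ x') * ‖f‖ := conv_dist_le μ ψ f x x'
        _ ≤ (ε / 2) * 1 := by
            refine mul_le_mul ?_ hf (norm_nonneg _) (by positivity)
            rw [dist_comm]
            exact le_of_lt hx'
        _ < ε := by linarith
  · exact mem_of_superset (Metric.closedBall_mem_nhds 0 one_pos)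
      fun f hf => subset_closure (mem_image_of_mem _ hf)

end Stmt15Aux

/-- For a compact Hausdorff group `G` with normalized Haar measure `μ` and
`ψ ∈ C(G;ℂ)`, the convolution `(ψ * f)(x) = ∫ ψ(xy⁻¹) f(y) dμ(y)` of `ψ` with
`f ∈ L²(G,μ)` is continuous, bounded by `‖ψ‖_∞ ‖f‖_{L²}`, and the resulting
convolution operator `T_ψ` on `L²(G,μ)` is a compact bounded linear
operator. -/
theorem stmt15 {G : Type*} [Group G] [TopologicalSpace G] [IsTopologicalGroup G]
    [CompactSpace G] [T2Space G] [MeasurableSpace G] [BorelSpace G]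
    (μ : Measure G) [μ.IsHaarMeasure] [IsProbabilityMeasure μ]
    (ψ : C(G, ℂ)) :
    (∀ f : Lp ℂ 2 μ,
      Continuous (fun x => ∫ y, ψ (x * y⁻¹) * f y ∂μ) ∧
      ∀ x : G, ‖∫ y, ψ (x * y⁻¹) * f y ∂μ‖ ≤ ‖ψ‖ * ‖f‖) ∧
    ∃ T : Lp ℂ 2 μ →L[ℂ] Lp ℂ 2 μ,
      (∀ f : Lp ℂ 2 μ, (T f : G → ℂ) =ᵐ[μ] fun x => ∫ y, ψ (x * y⁻¹) * f y ∂μ) ∧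
      IsCompactOperator (⇑T) := by
  refine ⟨fun f => ⟨Stmt15Aux.conv_continuous μ ψ f, Stmt15Aux.conv_norm_le μ ψ f⟩, ?_⟩
  refine ⟨(BoundedContinuousFunction.toLp (E := ℂ) 2 μ ℂ).comp (Stmt15Aux.convS μ ψ), ?_, ?_⟩
  · intro f
    have := BoundedContinuousFunction.coeFn_toLp (E := ℂ) 2 μ ℂ (Stmt15Aux.convS μ ψ f)
    refine this.trans ?_
    filter_upwards with x
    exact Stmt15Aux.convS_apply μ ψ f x
  · exact (Stmt15Aux.isCompactOperator_convS μ ψ).continuous_comp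
      (BoundedContinuousFunction.toLp (E := ℂ) 2 μ ℂ).continuous
end
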